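/- Let B be a square matrix with strictly positive real entries satisfying B² = c·B for some real c > 0. Then B has rank 1 and Tr(B) = c. -/
import Mathlib


/-- A square matrix with strictly positive real entries satisfying `B² = c • B` with
`c > 0` has rank 1 and trace `c`. -/
theorem stmt9 (r : ℕ) (hr : 0 < r) (B : Matrix (Fin r) (Fin r) ℝ)
    (hpos : ∀ i j, 0 < B i j)
    (c : ℝ) (hc : 0 < c) (hB : B * B = c • B) :
    B.rank = 1 ∧ B.trace = c := by
  set z : Fin r := ⟨0, hr⟩ with hz
  -- entrywise form of B * B = c • B
  have hmul : ∀ i j : Fin r, ∑ k, B i k * B k j = c * B i j := by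
    intro i j
    have := congrFun (congrFun hB i) j
    simpa [Matrix.mul_apply, Matrix.smul_apply] using this
  -- every column is a multiple of column z (Perron-type argument)
  have key : ∀ j : Fin r, ∃ t : ℝ, ∀ i, B i j = t * B i z := by
    intro j
    obtain ⟨i0, -, hi0⟩ := Finset.exists_min_image Finset.univ
      (fun i => B i j / B i z) ⟨z, Finset.mem_univ z⟩
    set t := B i0 j / B i0 z with ht
    have hle : ∀ i, t * B i z ≤ B i j := by
      intro i
      have h1 := hi0 i (Finset.mem_univ i)
      rw [ht, div_le_div_iff₀ (hpos i0 z) (hpos i z)] at h1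
      have h2 := hpos i z
      have h3 := hpos i0 z
      rw [ht, div_mul_eq_mul_div, div_le_iff₀ h3]
      nlinarith
    have h3 : B i0 j = t * B i0 z := (div_mul_cancel₀ _ (hpos i0 z).ne').symm
    have hsum : ∑ k, B i0 k * (B k j - t * B k z) = 0 := by
      have : ∑ k, B i0 k * (B k j - t * B k z)
          = (∑ k, B i0 k * B k j) - t * ∑ k, B i0 k * B k z := by
        rw [Finset.mul_sum, ← Finset.sum_sub_distrib]
        exact Finset.sum_congr rfl fun k _ => by ring
      rw [this, hmul i0 j, hmul i0 z, h3]; ring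
    have hterm := (Finset.sum_eq_zero_iff_of_nonneg (fun k _ => by
      have := hle k
      have := (hpos i0 k).le
      nlinarith)).mp hsum
    refine ⟨t, fun i => ?_⟩
    have hi := hterm i (Finset.mem_univ i)
    have hB0 := (hpos i0 i).ne'
    have : B i j - t * B i z = 0 := by
      rcases mul_eq_zero.mp hi with h | h
      · exact absurd h hB0
      · exact h
    linarith
  choose t ht using key
  -- trace computation
  have htz : t z = 1 := by
    have := ht z z
    have hBz := (hpos z z).ne'
    field_simp at this
    nlinarith [hpos z z, this]
  have htrace : B.trace = c := by
    have h1 : ∑ k, B z k * B k z = c * B z z := hmul z z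
    have h2 : ∑ k, B z k * B k z = B z z * B.trace := by
      rw [Matrix.trace, Finset.mul_sum]
      refine Finset.sum_congr rfl fun k _ => ?_
      rw [Matrix.diag_apply, ht k z, ht k k]
      ring
    have hBz := (hpos z z).ne'
    have h4 : B z z * B.trace = B z z * c := by
      rw [← h2, h1]; ring
    exact mul_left_cancel₀ hBz h4
  refine ⟨?_, htrace⟩
  -- rank: span of columns equals span of column z
  have hrank : B.rank = Module.finrank ℝ (Submodule.span ℝ (Set.range B.transpose)) :=
    Matrix.rank_eq_finrank_span_cols B
  have hspan : Submodule.span ℝ (Set.range B.transpose) = Submodule.span ℝ {B.transpose z} := by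
    apply le_antisymm
    · rw [Submodule.span_le]
      rintro _ ⟨j, rfl⟩
      have : B.transpose j = t j • B.transpose z := by
        funext i
        simp [Matrix.transpose_apply, ht j i]
      rw [this]
      exact Submodule.smul_mem _ _ (Submodule.subset_span rfl)
    · exact Submodule.span_mono (Set.singleton_subset_iff.mpr ⟨z, rfl⟩)
  have hne : B.transpose z ≠ 0 := by
    intro h
    have := congrFun h z
    simp [Matrix.transpose_apply] at this
    exact (hpos z z).ne' this
  rw [hrank, hspan, finrank_span_singleton hne]
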